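/- Let Δ be a Delta-operator on an implication algebra M. An element u is nowhere invariant (there is no v > u with Δ(v,u) = u) if and only if u ∨ Δ(1,u) = 1; moreover if u is nowhere invariant and u ≤ v then v is nowhere invariant. -/

import Mathlib

/-- An implication algebra: a join-semilattice with greatest element 1 in which
every interval [a,1] is a Boolean algebra, with `imp b a` (written b → a) the
relative complement of b over a. It satisfies (x→y)→y = x ⊔ y and
x→(y→z) = y→(x→z), and for a ≤ b, b → a is the complement of b in [a,1]. -/
class ImplicationAlgebra (α : Type*) extends SemilatticeSup α, OrderTop α where
  imp : α → α → α
  imp_imp : ∀ a b : α, imp (imp a b) b = a ⊔ b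
  exchange : ∀ a b c : α, imp a (imp b c) = imp b (imp a c)
  imp_glb : ∀ a b : α, a ≤ b → IsGLB {b, imp b a} a
  imp_sup : ∀ a b : α, a ≤ b → b ⊔ imp b a = ⊤

open ImplicationAlgebra

/-- A Delta-operator on an implication algebra: a (partial, here totalized)
binary operation Δ(b,a), meaningful for a ≤ b, satisfying the axioms of
Definition 3.1: Δ(b,a) ≤ b; Δ(a,a) = a; Δ(b,Δ(b,a)) = a; monotonicity in the
second argument; Δ(c,Δ(b,a)) = Δ(Δ(c,b),Δ(c,a)); for a < b either Δ(b,a) = a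
or Δ(b,a) and a have no lower bound; and Δ(b,a) = b ∧ Δ(1, b → a). -/
structure IsDeltaOperator {α : Type*} [ImplicationAlgebra α] (D : α → α → α) : Prop where
  delta_le : ∀ a b : α, a ≤ b → D b a ≤ b
  delta_refl : ∀ a : α, D a a = a
  delta_delta : ∀ a b : α, a ≤ b → D b (D b a) = a
  delta_mono : ∀ a b c : α, a ≤ b → b ≤ c → D c a ≤ D c b
  delta_comm : ∀ a b c : α, a ≤ b → b ≤ c → D c (D b a) = D (D c b) (D c a)
  delta_dichot : ∀ a b : α, a < b → D b a = a ∨ ¬∃ p, p ≤ a ∧ p ≤ D b a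
  delta_meet : ∀ a b : α, a ≤ b → IsGLB {b, D ⊤ (imp b a)} (D b a)

/-- For a Delta-operator Δ on an implication algebra: u is nowhere invariant
(no v > u with Δ(v,u) = u) iff u ∨ Δ(1,u) = 1; moreover nowhere invariance
propagates upwards. -/
theorem nowhereInvariant_iff_and_up {α : Type*} [ImplicationAlgebra α]
    (D : α → α → α) (hD : IsDeltaOperator D) :
    (∀ u : α, (¬∃ v : α, u < v ∧ D v u = u) ↔ u ⊔ D ⊤ u = ⊤) ∧
      (∀ u v : α, (¬∃ w : α, u < w ∧ D w u = u) → u ≤ v →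
        ¬∃ w : α, v < w ∧ D w v = v) := by

  have key : ∀ u : α, (¬∃ v : α, u < v ∧ D v u = u) ↔ u ⊔ D ⊤ u = ⊤ := by
    intro u
    constructor
    · intro hni
      by_contra hx
      set x := u ⊔ D ⊤ u with hxdef
      have hux : u ≤ x := le_sup_left
      set v := imp x u with hvdef
      have hglb := imp_glb u x hux
      have huv : u ≤ v := hglb.1 (by simp [Set.mem_insert_iff, hvdef])
      have hune : u ≠ v := by
        intro h
        apply hx
        have := imp_sup u x hux
        rw [← hvdef, ← h, sup_eq_left.mpr hux] at this
        exact this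
      have hlt : u < v := lt_of_le_of_ne huv hune
      have hvu : imp v u = x := by
        rw [hvdef, imp_imp, sup_eq_left.mpr hux]
      have hmeet := hD.delta_meet u v huv
      rw [hvu] at hmeet
      have huD : u ≤ D ⊤ x := by
        have h1 : D ⊤ (D ⊤ u) ≤ D ⊤ x := hD.delta_mono _ _ _ le_sup_right le_top
        rwa [hD.delta_delta u ⊤ le_top] at h1
      have hule : u ≤ D v u := by
        apply hmeet.2
        intro y hy
        rcases hy with rfl | hy
        · exact huv
        · simp only [Set.mem_singleton_iff] at hy; rw [hy]; exact huD
      rcases hD.delta_dichot u v hlt with h | h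
      · exact hni ⟨v, hlt, h⟩
      · exact h ⟨u, le_refl u, hule⟩
    · rintro h ⟨v, hlt, hDvu⟩
      have hglb := hD.delta_meet u v hlt.le
      rw [hDvu] at hglb
      have hu1 : u ≤ D ⊤ (imp v u) := hglb.1 (by simp [Set.mem_insert_iff])
      have hu2 : u ≤ imp v u := (imp_glb u v hlt.le).1 (by simp [Set.mem_insert_iff])
      have hu3 : D ⊤ u ≤ D ⊤ (imp v u) := hD.delta_mono _ _ _ hu2 le_top
      have htop : D ⊤ (imp v u) = ⊤ :=
        le_antisymm le_top (h.symm.trans_le (sup_le hu1 hu3))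
      have himp : imp v u = ⊤ := by
        have := hD.delta_delta (imp v u) ⊤ le_top
        rw [htop, hD.delta_refl] at this; exact this.symm
      have : v ≤ u := by
        apply (imp_glb u v hlt.le).2
        intro y hy
        rcases hy with rfl | hy
        · exact le_refl _
        · simp only [Set.mem_singleton_iff] at hy; rw [hy, himp]; exact le_top
      exact absurd this (not_le_of_gt hlt)
  refine ⟨key, fun u v hu huv => ?_⟩
  rw [key] at hu ⊢
  have : D ⊤ u ≤ D ⊤ v := hD.delta_mono _ _ _ huv le_top
  exact le_antisymm le_top (hu.symm.trans_le (sup_le (huv.trans le_sup_left) (this.trans le_sup_right)))
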